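/- Let k be a commutative ring which is a ℚ-algebra, A an associative unital k-algebra, λ ∈ k, and P a Rota–Baxter operator of weight λ on A. Then the k-linear map P̃ : A^ℕ → A^ℕ defined by P̃(a)_n = P(a_0) + λ·Σ_{i<n} a_i is a Rota–Baxter operator of weight λ on A^ℕ with the pointwise product: for all a, b ∈ A^ℕ and all n, P̃(a)_n·P̃(b)_n = P̃(P̃(a)·b + a·P̃(b) + λ·a·b)_n, where · denotes the pointwise product. -/
import Mathlib

/-- The lift `P̃` of an operator `P : A → A` to sequences:
`P̃(a)_n = P(a_0) + λ·∑_{i<n} a_i`. -/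
noncomputable def Ptil {k A : Type*} [CommRing k] [Ring A] [Algebra k A]
    (lam : k) (P : A → A) (a : ℕ → A) : ℕ → A := fun n =>
  P (a 0) + lam • ∑ i ∈ Finset.range n, a i


lemma abel_sum {A : Type*} [Ring A] (a b : ℕ → A) (n : ℕ) :
    (∑ i ∈ Finset.range n, a i) * (∑ i ∈ Finset.range n, b i) =
    ∑ i ∈ Finset.range n,
      ((∑ j ∈ Finset.range i, a j) * b i + a i * (∑ j ∈ Finset.range i, b j) + a i * b i) := by
  induction n with
  | zero => simp
  | succ n ih =>
    simp only [Finset.sum_range_succ, ← ih]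
    noncomm_ring

theorem stmt10 {k A : Type*} [CommRing k] [Algebra ℚ k] [Ring A] [Algebra k A] (lam : k)
    (P : A → A)
    (hPadd : ∀ x y : A, P (x + y) = P x + P y)
    (hPsmul : ∀ (c : k) (x : A), P (c • x) = c • P x)
    (hPRB : ∀ x y : A, P x * P y = P (P x * y + x * P y + lam • (x * y))) :
    (∀ a b : ℕ → A, Ptil lam P (a + b) = Ptil lam P a + Ptil lam P b) ∧
    (∀ (c : k) (a : ℕ → A), Ptil lam P (c • a) = c • Ptil lam P a) ∧
    (∀ (a b : ℕ → A) (n : ℕ),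
      Ptil lam P a n * Ptil lam P b n =
        Ptil lam P (Ptil lam P a * b + a * Ptil lam P b + lam • (a * b)) n) := by
  refine ⟨?_, ?_, ?_⟩
  · intro a b; funext n
    simp only [Ptil, Pi.add_apply, hPadd, Finset.sum_add_distrib, smul_add]
    abel
  · intro c a; funext n
    simp only [Ptil, Pi.smul_apply, hPsmul, ← Finset.smul_sum, smul_add, smul_comm c lam]
  · intro a b n
    simp only [Ptil, Pi.add_apply, Pi.mul_apply, Pi.smul_apply, Finset.range_zero,
      Finset.sum_empty, smul_zero, add_zero]
    rw [← hPRB]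
    simp only [add_mul, mul_add, Finset.sum_add_distrib, Finset.mul_sum, Finset.sum_mul,
      smul_mul_assoc, mul_smul_comm, smul_add, ← Finset.smul_sum, smul_smul]
    have key : ∑ x ∈ Finset.range n, ∑ i ∈ Finset.range n, a i * b x =
        ∑ x ∈ Finset.range n,
          (∑ i ∈ Finset.range x, a i * b x + ∑ i ∈ Finset.range x, a x * b i + a x * b x) := by
      simpa [Finset.sum_mul, Finset.mul_sum] using abel_sum a b n
    rw [key]
    simp only [Finset.sum_add_distrib, smul_add, smul_smul]
    abel
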